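/- Connect Four addition of finite standard sets in ℕ^d is associative and commutative, and the empty set is its neutral element. -/

import Mathlib

open Pointwise

/-- A *standard set* in `ℕ^n`: a finite set whose complement `C` satisfies `C + ℕ^n = C`. -/
def IsStdSet {n : ℕ} (S : Set (Fin n → ℕ)) : Prop :=
  S.Finite ∧ Sᶜ + (Set.univ : Set (Fin n → ℕ)) = Sᶜ

/-- Projection `ℕ^{d+1} → ℕ^d` to the first `d` coordinates. -/
def proj {d : ℕ} (b : Fin (d + 1) → ℕ) : Fin d → ℕ := fun i => b i.castSucc

/-- The *height* of `S ⊆ ℕ^{d+1}` over `γ ∈ ℕ^d`: the cardinality of the fiber of the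
projection over `γ`. -/
noncomputable def height {d : ℕ} (S : Set (Fin (d + 1) → ℕ)) (g : Fin d → ℕ) : ℕ :=
  {b ∈ S | proj b = g}.ncard

/-- The *Connect Four sum* of two subsets of `ℕ^{d+1}`. -/
def C4sum {d : ℕ} (S T : Set (Fin (d + 1) → ℕ)) : Set (Fin (d + 1) → ℕ) :=
  {b | b (Fin.last d) < height S (proj b) + height T (proj b)}

lemma proj_snoc {d : ℕ} (g : Fin d → ℕ) (k : ℕ) : proj (Fin.snoc g k) = g := by
  funext i; simp [proj]

lemma snoc_proj {d : ℕ} (b : Fin (d + 1) → ℕ) :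
    Fin.snoc (proj b) (b (Fin.last d)) = b := by
  funext i
  refine Fin.lastCases ?_ (fun i => ?_) i
  · simp
  · simp [proj]

lemma downclosed_eq_Iio {A : Set ℕ} (hfin : A.Finite)
    (hdc : ∀ k ∈ A, ∀ j ≤ k, j ∈ A) : A = Set.Iio A.ncard := by
  rcases A.eq_empty_or_nonempty with h | h
  · ext x; simp [h]
  · obtain ⟨m, hmA, hmax⟩ := Set.Finite.exists_maximalFor id A hfin h
    have hA : A = Set.Iic m := by
      ext x
      constructor
      · intro hx
        rw [Set.mem_Iic]
        by_contra hx'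
        push_neg at hx'
        have := hmax hx (le_of_lt hx')
        simp only [id] at this
        omega
      · intro hx; exact hdc m hmA x hx
    rw [hA]
    have : (Set.Iic m).ncard = m + 1 := by
      rw [show Set.Iic m = ↑(Finset.Iic m) by simp, Set.ncard_coe_finset]
      simp
    rw [this]
    ext x; simp [Nat.lt_succ_iff]

lemma height_eq_ncard {d : ℕ} (S : Set (Fin (d + 1) → ℕ)) (g : Fin d → ℕ) :
    height S g = {k | Fin.snoc g k ∈ S}.ncard := by
  have himg : {b ∈ S | proj b = g} = (fun k => Fin.snoc g k) '' {k | Fin.snoc g k ∈ S} := by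
    ext b
    constructor
    · rintro ⟨hb, hp⟩
      refine ⟨b (Fin.last d), ?_, ?_⟩
      · show Fin.snoc g (b (Fin.last d)) ∈ S
        rw [← hp, snoc_proj]; exact hb
      · rw [← hp]; exact snoc_proj b
    · rintro ⟨k, hk, rfl⟩
      exact ⟨hk, proj_snoc g k⟩
  have hinj : Function.Injective (fun k => (Fin.snoc g k : Fin (d + 1) → ℕ)) := by
    intro a b hab
    have := congrFun hab (Fin.last d)
    simpa using this
  rw [height, himg, Set.ncard_image_of_injective _ hinj]

lemma std_downclosed {d : ℕ} {S : Set (Fin (d + 1) → ℕ)} (hS : IsStdSet S)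
    {b c : Fin (d + 1) → ℕ} (hbc : ∀ i, b i ≤ c i) (hc : c ∈ S) : b ∈ S := by
  by_contra hb
  have hmem : b + (c - b) ∈ Sᶜ + (Set.univ : Set (Fin (d + 1) → ℕ)) :=
    Set.add_mem_add hb (Set.mem_univ _)
  rw [hS.2] at hmem
  have : b + (c - b) = c := by
    funext i
    simp only [Pi.add_apply, Pi.sub_apply]
    have := hbc i
    omega
  rw [this] at hmem
  exact hmem hc

lemma mem_iff_lt_height {d : ℕ} {S : Set (Fin (d + 1) → ℕ)} (hS : IsStdSet S)
    (b : Fin (d + 1) → ℕ) : b ∈ S ↔ b (Fin.last d) < height S (proj b) := by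
  set g := proj b with hg
  set A : Set ℕ := {k | Fin.snoc g k ∈ S} with hA
  have hfin : A.Finite := by
    have : A ⊆ (fun c => c (Fin.last d)) '' {b ∈ S | proj b = g} := by
      intro k hk
      exact ⟨Fin.snoc g k, ⟨hk, proj_snoc g k⟩, by simp⟩
    exact Set.Finite.subset ((hS.1.subset (Set.sep_subset _ _)).image _) this
  have hdc : ∀ k ∈ A, ∀ j ≤ k, j ∈ A := by
    intro k hk j hj
    refine std_downclosed hS (c := Fin.snoc g k) ?_ hk
    intro i
    refine Fin.lastCases ?_ (fun i => ?_) i <;> simp [hj]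
  have key := downclosed_eq_Iio hfin hdc
  have hb : b ∈ S ↔ b (Fin.last d) ∈ A := by
    rw [hA]; simp only [Set.mem_setOf_eq, hg, snoc_proj]
  rw [hb, key, height_eq_ncard]
  simp [hA]

lemma height_c4sum {d : ℕ} (S T : Set (Fin (d + 1) → ℕ)) (g : Fin d → ℕ) :
    height (C4sum S T) g = height S g + height T g := by
  rw [height_eq_ncard]
  have : {k | Fin.snoc g k ∈ C4sum S T} = Set.Iio (height S g + height T g) := by
    ext k
    simp [C4sum, proj_snoc]
  rw [this]
  rw [show Set.Iio (height S g + height T g) = ↑(Finset.Iio (height S g + height T g)) by simp,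
    Set.ncard_coe_finset]
  simp

lemma height_empty {d : ℕ} (g : Fin d → ℕ) :
    height (∅ : Set (Fin (d + 1) → ℕ)) g = 0 := by
  simp [height]

/-- Connect Four addition of finite standard sets is associative and commutative, and
the empty set is its neutral element. -/
theorem c4sum_assoc_comm_neutral {d : ℕ} :
    (∀ S T U : Set (Fin (d + 1) → ℕ), IsStdSet S → IsStdSet T → IsStdSet U →
      C4sum (C4sum S T) U = C4sum S (C4sum T U)) ∧
    (∀ S T : Set (Fin (d + 1) → ℕ), IsStdSet S → IsStdSet T →
      C4sum S T = C4sum T S) ∧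
    (∀ S : Set (Fin (d + 1) → ℕ), IsStdSet S →
      C4sum S ∅ = S ∧ C4sum ∅ S = S) := by
  refine ⟨?_, ?_, ?_⟩
  · intro S T U _ _ _
    ext b
    show b (Fin.last d) < height (C4sum S T) (proj b) + height U (proj b) ↔
        b (Fin.last d) < height S (proj b) + height (C4sum T U) (proj b)
    rw [height_c4sum, height_c4sum]
    omega
  · intro S T _ _
    ext b
    show b (Fin.last d) < height S (proj b) + height T (proj b) ↔
        b (Fin.last d) < height T (proj b) + height S (proj b)
    omega
  · intro S hS
    constructor <;> ext b
    · show b (Fin.last d) < height S (proj b) + height ∅ (proj b) ↔ b ∈ S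
      rw [height_empty, mem_iff_lt_height hS b]
      omega
    · show b (Fin.last d) < height ∅ (proj b) + height S (proj b) ↔ b ∈ S
      rw [height_empty, mem_iff_lt_height hS b]
      omega
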